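/- Let q ≥ 3 be an odd integer and n ≥ 6 an even integer. Then the period of any orientable sequence of order n over ℤ_q is at most (q^n − 2q^{n/2} − q^{(n-2)/2} + 2q)/2. -/

import Mathlib

namespace OSeq

variable {q : ℕ}

/-- The `n`-tuple (window) of the sequence `s` at position `i`. -/
def window (s : ℤ → ZMod q) (n : ℕ) (i : ℤ) : Fin n → ZMod q :=
  fun k => s (i + (k : ℕ))

/-- The reverse of an `n`-tuple. -/
def tupRev {n : ℕ} (u : Fin n → ZMod q) : Fin n → ZMod q :=
  fun k => u k.rev

/-- `m` is the (least) period of the periodic sequence `s`. -/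
def IsPeriod (s : ℤ → ZMod q) (m : ℕ) : Prop :=
  0 < m ∧ (∀ i : ℤ, s (i + (m : ℤ)) = s i) ∧
    ∀ m' : ℕ, 0 < m' → (∀ i : ℤ, s (i + (m' : ℤ)) = s i) → m ≤ m'

/-- `s` is an `n`-window sequence of period `m`. -/
def IsNWindowSeq (s : ℤ → ZMod q) (n m : ℕ) : Prop :=
  IsPeriod s m ∧ ∀ i j : ℤ, window s n i = window s n j → i ≡ j [ZMOD (m : ℤ)]

/-- `s` is an orientable sequence of order `n` and period `m`. -/
def IsOS (s : ℤ → ZMod q) (n m : ℕ) : Prop :=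
  IsNWindowSeq s n m ∧ ∀ i j : ℤ, window s n i ≠ tupRev (window s n j)

/-- `s` is a negative orientable sequence of order `n` and period `m`. -/
def IsNOS (s : ℤ → ZMod q) (n m : ℕ) : Prop :=
  IsNWindowSeq s n m ∧ ∀ i j : ℤ, window s n i ≠ - tupRev (window s n j)

/-- `s` is a special orientable sequence of order `n` and period `m`:
orientable and also negative orientable. -/
def IsSpecialOS (s : ℤ → ZMod q) (n m : ℕ) : Prop :=
  IsOS s n m ∧ ∀ i j : ℤ, window s n i ≠ - tupRev (window s n j)

/-- The weight modulo `q` of one period of `s`. -/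
def wq (s : ℤ → ZMod q) (m : ℕ) : ZMod q :=
  ∑ i ∈ Finset.range m, s (i : ℤ)

/-- The alternating sign weight modulo `q` of one period of `s`. -/
def wqA (s : ℤ → ZMod q) (m : ℕ) : ZMod q :=
  ∑ i ∈ Finset.range m, (-1 : ZMod q) ^ (m - 1 - i) * s (i : ℤ)

/-- The Lempel homomorphism `D` on sequences. -/
def D (t : ℤ → ZMod q) : ℤ → ZMod q := fun j => t (j + 1) - t j

/-- The homomorphism `A` on sequences. -/
def A (t : ℤ → ZMod q) : ℤ → ZMod q := fun j => t (j + 1) + t j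

/-- Shift of a sequence by `c`. -/
def shift (t : ℤ → ZMod q) (c : ℤ) : ℤ → ZMod q := fun i => t (i + c)

/-- `t'` is a translate of `t`. -/
def IsTranslate (t t' : ℤ → ZMod q) : Prop := ∃ c : ZMod q, ∀ i : ℤ, t' i = t i + c

/-- `t'` is an alternating sign translate of `t`. -/
def IsAltTranslate (t t' : ℤ → ZMod q) : Prop :=
  ∃ c : ZMod q, ∀ i : ℤ, t' i = t i + (if i % 2 = 0 then c else -c)

/-- Two sequences are (`n`-window) disjoint. -/
def WindowDisjoint (n : ℕ) (s t : ℤ → ZMod q) : Prop :=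
  ∀ i j : ℤ, window s n i ≠ window t n j

/-- Orientable-disjoint. -/
def ODisjoint (n : ℕ) (s t : ℤ → ZMod q) : Prop :=
  WindowDisjoint n s t ∧ ∀ i j : ℤ, window s n i ≠ tupRev (window t n j)

/-- Negative orientable-disjoint (no-disjoint). -/
def NODisjoint (n : ℕ) (s t : ℤ → ZMod q) : Prop :=
  WindowDisjoint n s t ∧ ∀ i j : ℤ, window s n i ≠ - tupRev (window t n j)

/-- Special-orientable-disjoint. -/
def SpecialODisjoint (n : ℕ) (s t : ℤ → ZMod q) : Prop :=
  ODisjoint n s t ∧ ∀ i j : ℤ, window s n i ≠ - tupRev (window t n j)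

/-- The string `a^t` appears in `s`. -/
def HasString (s : ℤ → ZMod q) (a : ZMod q) (t : ℕ) : Prop :=
  ∃ j : ℤ, ∀ k : ℕ, k < t → s (j + (k : ℤ)) = a

/-- There is a run `a^t` of `a` in `s` starting at position `j`. -/
def IsRunAt (s : ℤ → ZMod q) (a : ZMod q) (j : ℤ) (t : ℕ) : Prop :=
  (∀ k : ℕ, k < t → s (j + (k : ℤ)) = a) ∧ s (j - 1) ≠ a ∧ s (j + (t : ℤ)) ≠ a

/-- `a^t` is a maximal run of `a` in `s`: the string `a^t` appears and every
string `a^{t'}` appearing in `s` has `t' ≤ t`. -/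
def IsMaxRun (s : ℤ → ZMod q) (a : ZMod q) (t : ℕ) : Prop :=
  HasString s a t ∧ ∀ t' : ℕ, HasString s a t' → t' ≤ t

/-- `k`-th entry of the alternating string `a, -a, a, -a, ...`. -/
def altVal (a : ZMod q) (k : ℕ) : ZMod q := if k % 2 = 0 then a else -a

/-- The signed string `ạ^t` (alternating `a, -a, ...`) appears in `s`. -/
def HasSignedString (s : ℤ → ZMod q) (a : ZMod q) (t : ℕ) : Prop :=
  ∃ j : ℤ, ∀ k : ℕ, k < t → s (j + (k : ℤ)) = altVal a k

/-- There is a signed run `ạ^t` of `a` in `s` starting at position `j`. -/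
def IsSignedRunAt (s : ℤ → ZMod q) (a : ZMod q) (j : ℤ) (t : ℕ) : Prop :=
  (∀ k : ℕ, k < t → s (j + (k : ℤ)) = altVal a k) ∧
    s (j - 1) ≠ -a ∧ s (j + (t : ℤ)) ≠ altVal a t

/-- `ạ^t` is a maximal signed run of `a` in `s`. -/
def IsMaxSignedRun (s : ℤ → ZMod q) (a : ZMod q) (t : ℕ) : Prop :=
  HasSignedString s a t ∧ ∀ t' : ℕ, HasSignedString s a t' → t' ≤ t

/-- The sequence obtained from the ring sequence `[s_0,...,s_{m-1}]` of `s` by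
inserting one extra symbol `a` at ring position `r`, i.e. with ring sequence
`[s_0,...,s_{r-1}, a, s_r, ..., s_{m-1}]` of length `m+1`. -/
def insert1 (s : ℤ → ZMod q) (m r : ℕ) (a : ZMod q) : ℤ → ZMod q :=
  fun j =>
    let j' := (j % ((m : ℤ) + 1)).toNat
    if j' < r then s (j' : ℤ) else if j' = r then a else s ((j' : ℤ) - 1)

/-- The sequence obtained from the ring sequence `[s_0,...,s_{m-1}]` of `s` by
inserting the two symbols `a, -a` at ring position `r`, i.e. with ring sequence
`[s_0,...,s_{r-1}, a, -a, s_r, ..., s_{m-1}]` of length `m+2`. -/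
def insert2 (s : ℤ → ZMod q) (m r : ℕ) (a : ZMod q) : ℤ → ZMod q :=
  fun j =>
    let j' := (j % ((m : ℤ) + 2)).toNat
    if j' < r then s (j' : ℤ)
    else if j' = r then a
    else if j' = r + 1 then -a
    else s ((j' : ℤ) - 2)

/-- The operation `E_a` (with the convention `E_0(S) = S`). -/
def Emod (s : ℤ → ZMod q) (m r : ℕ) (a : ZMod q) : ℤ → ZMod q :=
  if a = 0 then s else insert1 s m r a

/-- A sequence is good (for order `n`) if every run of `0` has length at most `n-2`. -/
def GoodSeq (s : ℤ → ZMod q) (n : ℕ) : Prop :=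
  ∀ t : ℕ, HasString s 0 t → t ≤ n - 2

/-- A tuple is uniform if it is constant. -/
def Uniform {n : ℕ} (u : Fin n → ZMod q) : Prop := ∃ c : ZMod q, ∀ i, u i = c

/-- A tuple is symmetric if it equals its own reverse. -/
def Symm {n : ℕ} (u : Fin n → ZMod q) : Prop := ∀ i : Fin n, u i = u i.rev

/-- An `n`-tuple is `m`-symmetric (`m ≤ n`) if `u_i = u_{m-1-i}` for `0 ≤ i ≤ m-1`. -/
def MSymm {n : ℕ} (u : Fin n → ZMod q) (m : ℕ) (hm : m ≤ n) : Prop :=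
  ∀ i : Fin m, u (Fin.castLE hm i) = u (Fin.castLE hm i.rev)

/-- An `n`-tuple (`n ≥ 2`) is alternating. -/
def Alternating {n : ℕ} (hn : 2 ≤ n) (u : Fin n → ZMod q) : Prop :=
  u ⟨0, by omega⟩ ≠ u ⟨1, by omega⟩ ∧
    ∀ i : Fin n, u i = if (i : ℕ) % 2 = 0 then u ⟨0, by omega⟩ else u ⟨1, by omega⟩

/-- `L_n(v)`: the set of `n`-tuples whose first `n-r` entries agree with the
`(n-r)`-tuple `v`. -/
def Lset (n r : ℕ) (v : Fin (n - r) → ZMod q) : Set (Fin n → ZMod q) :=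
  {u | ∀ i : Fin (n - r), u (Fin.castLE (Nat.sub_le n r) i) = v i}

/-- The `n`-tuple `u` appears in the sequence `s`. -/
def AppearsIn (s : ℤ → ZMod q) (n : ℕ) (u : Fin n → ZMod q) : Prop :=
  ∃ i : ℤ, window s n i = u

end OSeq

open OSeq

section Aux

variable {q n : ℕ}

lemma aux_fcg (u : Fin n → ZMod q) {a b : ℕ} (ha : a < n) (hb : b < n) (h : a = b) :
    u ⟨a, ha⟩ = u ⟨b, hb⟩ := by subst h; rfl

lemma aux_rev_apply (u : Fin n → ZMod q) (j : ℕ) (hj : j < n) (h2 : n - 1 - j < n) :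
    tupRev u ⟨j, hj⟩ = u ⟨n - 1 - j, h2⟩ := by
  show u (Fin.rev ⟨j, hj⟩) = _
  congr 1
  ext
  simp only [Fin.val_rev]
  omega

lemma aux_rev_invol (u : Fin n → ZMod q) : tupRev (tupRev u) = u := by
  funext k; show u k.rev.rev = u k; rw [Fin.rev_rev]

/-- palindrome of length `n-1` built from `v`, as a function on `ℕ`. -/
def OSpv (q n : ℕ) (v : Fin (n / 2) → ZMod q) (j : ℕ) : ZMod q :=
  if h : min j (n - 2 - j) < n / 2 then v ⟨min j (n - 2 - j), h⟩ else 0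

def OSL (q n : ℕ) (v : Fin (n / 2) → ZMod q) (x : ZMod q) : Fin n → ZMod q :=
  fun k => if (k : ℕ) = 0 then x else OSpv q n v ((k : ℕ) - 1)

def OSR (q n : ℕ) (v : Fin (n / 2) → ZMod q) (y : ZMod q) : Fin n → ZMod q :=
  fun k => if (k : ℕ) = n - 1 then y else OSpv q n v (k : ℕ)

lemma OSpv_pal (v : Fin (n / 2) → ZMod q) {j : ℕ} (hj : j ≤ n - 2) :
    OSpv q n v j = OSpv q n v (n - 2 - j) := by
  unfold OSpv
  have h : min (n - 2 - j) (n - 2 - (n - 2 - j)) = min j (n - 2 - j) := by omega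
  rw [h]

lemma OSpv_lt (hne : n % 2 = 0) (hn : 2 ≤ n) (v : Fin (n / 2) → ZMod q) {j : ℕ}
    (hj : j < n / 2) : OSpv q n v j = v ⟨j, hj⟩ := by
  unfold OSpv
  have h : min j (n - 2 - j) = j := by omega
  rw [h, dif_pos hj]

lemma aux_OSL_mk (v : Fin (n / 2) → ZMod q) (x : ZMod q) (j : ℕ) (hj : j < n) :
    OSL q n v x ⟨j, hj⟩ = if j = 0 then x else OSpv q n v (j - 1) := rfl

lemma aux_OSR_mk (v : Fin (n / 2) → ZMod q) (y : ZMod q) (j : ℕ) (hj : j < n) :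
    OSR q n v y ⟨j, hj⟩ = if j = n - 1 then y else OSpv q n v j := rfl

lemma aux_rev_L (hn : 2 ≤ n) (v : Fin (n / 2) → ZMod q) (x : ZMod q) :
    tupRev (OSL q n v x) = OSR q n v x := by
  funext k
  obtain ⟨j, hj⟩ := k
  rw [aux_rev_apply _ j hj (by omega), aux_OSL_mk, aux_OSR_mk]
  by_cases hcase : j = n - 1
  · rw [if_pos (by omega), if_pos hcase]
  · rw [if_neg (by omega), if_neg hcase]
    have h1 : n - 1 - j - 1 = n - 2 - j := by omega
    rw [h1]
    exact (OSpv_pal v (by omega)).symm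

/-- the last `n-1` entries of `u` form a palindrome -/
def OSSuffPal (q n : ℕ) (u : Fin n → ZMod q) : Prop :=
  ∀ j : ℕ, 1 ≤ j → ∀ (hj : j < n) (hj' : n - j < n), u ⟨j, hj⟩ = u ⟨n - j, hj'⟩

/-- `u` has period two as a string -/
def OSAlt (q n : ℕ) (u : Fin n → ZMod q) : Prop :=
  ∀ j : ℕ, 2 ≤ j → ∀ (hj : j < n) (hj' : j - 2 < n), u ⟨j, hj⟩ = u ⟨j - 2, hj'⟩

lemma suffpal_OSL (hn : 2 ≤ n) (v : Fin (n / 2) → ZMod q) (x : ZMod q) :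
    OSSuffPal q n (OSL q n v x) := by
  intro j h1 hj hj'
  rw [aux_OSL_mk, aux_OSL_mk, if_neg (by omega), if_neg (by omega)]
  have h2 : n - j - 1 = n - 2 - (j - 1) := by omega
  rw [h2]
  exact OSpv_pal v (by omega)

lemma alt_of_two_pal (hn : 6 ≤ n) (u : Fin n → ZMod q) (h1 : OSSuffPal q n u)
    (h2 : OSSuffPal q n (tupRev u)) : OSAlt q n u := by
  have rel2 : ∀ t : ℕ, t ≤ n - 2 → ∀ (ht : t < n) (ht' : n - 2 - t < n),
      u ⟨t, ht⟩ = u ⟨n - 2 - t, ht'⟩ := by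
    intro t htle ht ht'
    have hx := h2 (n - 1 - t) (by omega) (by omega) (by omega)
    rw [aux_rev_apply u _ (by omega) (by omega),
        aux_rev_apply u _ (by omega) (by omega)] at hx
    calc u ⟨t, ht⟩ = u ⟨n - 1 - (n - 1 - t), by omega⟩ := aux_fcg u _ _ (by omega)
      _ = u ⟨n - 1 - (n - (n - 1 - t)), by omega⟩ := hx
      _ = u ⟨n - 2 - t, ht'⟩ := aux_fcg u _ _ (by omega)
  intro j hj2 hj hj'
  by_cases hc : j ≤ n - 2
  · calc u ⟨j, hj⟩ = u ⟨n - j, by omega⟩ := h1 j (by omega) hj (by omega)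
      _ = u ⟨n - 2 - (j - 2), by omega⟩ := aux_fcg u _ _ (by omega)
      _ = u ⟨j - 2, hj'⟩ := (rel2 (j - 2) (by omega) (by omega) (by omega)).symm
  · have hj1 : j = n - 1 := by omega
    calc u ⟨j, hj⟩ = u ⟨n - j, by omega⟩ := h1 j (by omega) hj (by omega)
      _ = u ⟨1, by omega⟩ := aux_fcg u _ _ (by omega)
      _ = u ⟨n - 2 - 1, by omega⟩ := rel2 1 (by omega) (by omega) (by omega)
      _ = u ⟨j - 2, hj'⟩ := aux_fcg u _ _ (by omega)

lemma const_of_suffpal_symm (hn : 2 ≤ n) (u : Fin n → ZMod q) (h1 : OSSuffPal q n u)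
    (h2 : tupRev u = u) : ∃ c : ZMod q, ∀ k : Fin n, u k = c := by
  have step : ∀ j : ℕ, 1 ≤ j → ∀ (hj : j < n) (hj' : j - 1 < n),
      u ⟨j, hj⟩ = u ⟨j - 1, hj'⟩ := by
    intro j h1j hj hj'
    have hs := h1 j h1j hj (by omega)
    have hr := congrFun h2 (⟨j - 1, hj'⟩ : Fin n)
    rw [aux_rev_apply u _ hj' (by omega)] at hr
    calc u ⟨j, hj⟩ = u ⟨n - j, by omega⟩ := hs
      _ = u ⟨n - 1 - (j - 1), by omega⟩ := aux_fcg u _ _ (by omega)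
      _ = u ⟨j - 1, hj'⟩ := hr
  refine ⟨u ⟨0, by omega⟩, ?_⟩
  intro k
  obtain ⟨j, hj⟩ := k
  induction j with
  | zero => rfl
  | succ i ih =>
    have := step (i + 1) (by omega) hj (by omega)
    simp only [Nat.add_sub_cancel] at this
    rw [this, ih (by omega)]

lemma alt_eq_of_two (hn : 2 ≤ n) (u u' : Fin n → ZMod q) (hu : OSAlt q n u)
    (hu' : OSAlt q n u') (e0 : u ⟨0, by omega⟩ = u' ⟨0, by omega⟩)
    (e1 : u ⟨1, by omega⟩ = u' ⟨1, by omega⟩) : u = u' := by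
  funext k
  obtain ⟨j, hj⟩ := k
  induction j using Nat.strong_induction_on with
  | _ j ih =>
    match j, hj, ih with
    | 0, hj, _ => exact e0
    | 1, hj, _ => exact e1
    | (i + 2), hj, ih =>
      calc u ⟨i + 2, hj⟩ = u ⟨i + 2 - 2, by omega⟩ := hu (i + 2) (by omega) hj (by omega)
        _ = u ⟨i, by omega⟩ := aux_fcg u _ _ (by omega)
        _ = u' ⟨i, by omega⟩ := ih i (by omega) (by omega)
        _ = u' ⟨i + 2 - 2, by omega⟩ := aux_fcg u' _ _ (by omega)
        _ = u' ⟨i + 2, hj⟩ := (hu' (i + 2) (by omega) hj (by omega)).symm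

end Aux

/-- For odd `q ≥ 3` and even `n ≥ 6`, the period of any orientable sequence of
order `n` over `ℤ_q` is at most `(q^n - 2q^{n/2} - q^{(n-2)/2} + 2q)/2`. -/
theorem period_le_of_orientable_odd_q_even_n {q n m : ℕ} (hq : 3 ≤ q) (hqodd : Odd q)
    (hn : 6 ≤ n) (hneven : Even n) (s : ℤ → ZMod q) (hS : IsOS s n m) :
    2 * (m : ℤ) ≤ (q : ℤ) ^ n - 2 * (q : ℤ) ^ (n / 2) - (q : ℤ) ^ ((n - 2) / 2)
      + 2 * q := by
  classical
  have hnmod : n % 2 = 0 := Nat.even_iff.mp hneven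
  haveI : NeZero q := ⟨by omega⟩
  obtain ⟨⟨⟨hm0, hper, -⟩, hwin⟩, horient⟩ := hS
  -- iterated periodicity
  have hper2 : ∀ (k i : ℤ), s (i + k * m) = s i := by
    intro k
    induction k using Int.induction_on with
    | zero => intro i; simp
    | succ k ih =>
      intro i
      have h1 := ih (i + m)
      have e : i + (k + 1) * m = i + (m : ℤ) + k * m := by ring
      rw [e, h1, hper i]
    | pred k ih =>
      intro i
      have h1 := ih (i - m)
      have e : i + (-k - 1) * m = i - (m : ℤ) + (-k) * m := by ring
      have h2 := hper (i - m)
      have e2 : i - (m : ℤ) + m = i := by ring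
      rw [e2] at h2
      rw [e, h1]
      exact h2.symm
  have scong : ∀ i j : ℤ, i ≡ j [ZMOD (m : ℤ)] → s i = s j := by
    intro i j hij
    obtain ⟨k, hk⟩ := Int.ModEq.dvd hij
    have e : j = i + k * (m : ℤ) := by linear_combination hk
    rw [e, hper2]
  -- the set of windows
  set W : Finset (Fin n → ZMod q) :=
    Finset.univ.filter (fun u => ∃ i : ℤ, window s n i = u) with hWdef
  have hWmem : ∀ u, u ∈ W ↔ ∃ i : ℤ, window s n i = u := by
    intro u; rw [hWdef]; simp only [Finset.mem_filter, Finset.mem_univ, true_and]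
  have hWwin : ∀ i : ℤ, window s n i ∈ W := fun i => (hWmem _).mpr ⟨i, rfl⟩
  set WR : Finset (Fin n → ZMod q) := W.image tupRev with hWRdef
  have hWRmem : ∀ u, u ∈ WR ↔ tupRev u ∈ W := by
    intro u
    rw [hWRdef]
    constructor
    · intro h
      obtain ⟨w, hw, hwu⟩ := Finset.mem_image.mp h
      rw [← hwu, aux_rev_invol]; exact hw
    · intro h
      exact Finset.mem_image.mpr ⟨tupRev u, h, aux_rev_invol u⟩
  have hWWR : ∀ u, u ∈ W → u ∈ WR → False := by
    intro u h1 h2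
    obtain ⟨i, hi⟩ := (hWmem u).mp h1
    obtain ⟨j, hj⟩ := (hWmem _).mp ((hWRmem u).mp h2)
    exact horient j i (by rw [hj, hi])
  have hWsym : ∀ u, u ∈ W → tupRev u ≠ u := by
    intro u h1 h2
    exact hWWR u h1 ((hWRmem u).mpr (by rw [h2]; exact h1))
  have hWRsym : ∀ u, u ∈ WR → tupRev u ≠ u := by
    intro u h1 h2
    have h3 := (hWRmem u).mp h1
    rw [h2] at h3
    exact hWWR u h3 h1
  set SymF : Finset (Fin n → ZMod q) := Finset.univ.filter (fun u => tupRev u = u)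
    with hSymdef
  set X : Finset (Fin n → ZMod q) :=
    Finset.univ.filter (fun u => u ∉ W ∧ u ∉ WR ∧ tupRev u ≠ u) with hXdef
  have hXmem : ∀ u, u ∈ X ↔ (u ∉ W ∧ u ∉ WR ∧ tupRev u ≠ u) := by
    intro u; rw [hXdef]; simp only [Finset.mem_filter, Finset.mem_univ, true_and]
  -- basic counting
  have hcard1 : W.card + WR.card + SymF.card + X.card ≤ q ^ n := by
    have d1 : Disjoint W WR := Finset.disjoint_left.mpr fun {u} h1 h2 => hWWR u h1 h2
    have d2 : Disjoint (W ∪ WR) SymF := by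
      rw [Finset.disjoint_left]
      intro u hu hu2
      have hsym : tupRev u = u := by
        have := hu2; rw [hSymdef] at this
        exact (Finset.mem_filter.mp this).2
      rcases Finset.mem_union.mp hu with h | h
      · exact hWsym u h hsym
      · exact hWRsym u h hsym
    have d3 : Disjoint (W ∪ WR ∪ SymF) X := by
      rw [Finset.disjoint_left]
      intro u hu hu2
      obtain ⟨h1, h2, h3⟩ := (hXmem u).mp hu2
      rcases Finset.mem_union.mp hu with h | h
      · rcases Finset.mem_union.mp h with h' | h'
        · exact h1 h'
        · exact h2 h'
      · refine h3 ?_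
        rw [hSymdef] at h
        exact (Finset.mem_filter.mp h).2
    calc W.card + WR.card + SymF.card + X.card
        = (W ∪ WR ∪ SymF ∪ X).card := by
          rw [Finset.card_union_of_disjoint d3, Finset.card_union_of_disjoint d2,
            Finset.card_union_of_disjoint d1]
      _ ≤ Fintype.card (Fin n → ZMod q) := Finset.card_le_univ _
      _ = q ^ n := by simp [Fintype.card_fun, ZMod.card]
  have hrevinj : Function.Injective (tupRev : (Fin n → ZMod q) → (Fin n → ZMod q)) := by
    intro a b h
    rw [← aux_rev_invol a, h, aux_rev_invol]
  have hWRcard : WR.card = W.card := by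
    rw [hWRdef]; exact Finset.card_image_of_injective _ hrevinj
  have hmW : m ≤ W.card := by
    have h := Finset.card_le_card_of_injOn (fun i : ℕ => window s n (i : ℤ))
      (fun i _ => hWwin _) (s := Finset.range m) (t := W) ?_
    · rwa [Finset.card_range] at h
    · intro i hi j hj h
      have hi' : i < m := Finset.mem_range.mp (Finset.mem_coe.mp hi)
      have hj' : j < m := Finset.mem_range.mp (Finset.mem_coe.mp hj)
      have hmod : ((i : ℤ)) % (m : ℤ) = ((j : ℤ)) % (m : ℤ) := hwin _ _ h
      rw [Int.emod_eq_of_lt (by positivity) (by exact_mod_cast hi'),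
        Int.emod_eq_of_lt (by positivity) (by exact_mod_cast hj')] at hmod
      exact_mod_cast hmod
  have hSymcard : q ^ (n / 2) ≤ SymF.card := by
    have h := Finset.card_le_card_of_injOn
      (fun v : Fin (n / 2) → ZMod q =>
        (fun k : Fin n => v ⟨min (k : ℕ) (n - 1 - (k : ℕ)), by
          have := k.isLt; omega⟩))
      (s := Finset.univ) (t := SymF) ?_ ?_
    · calc q ^ (n / 2) = (Finset.univ : Finset (Fin (n / 2) → ZMod q)).card := by
            rw [Finset.card_univ]; simp [Fintype.card_fun, ZMod.card]
        _ ≤ SymF.card := h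
    · intro v _
      rw [Finset.mem_coe, hSymdef, Finset.mem_filter]
      refine ⟨Finset.mem_univ _, ?_⟩
      funext k
      obtain ⟨j, hj⟩ := k
      rw [aux_rev_apply _ j hj (by omega)]
      show v ⟨min (n - 1 - j) (n - 1 - (n - 1 - j)), by omega⟩
          = v ⟨min j (n - 1 - j), by omega⟩
      exact aux_fcg v _ _ (by omega)
    · intro v _ v' _ h
      funext j
      obtain ⟨t, ht⟩ := j
      have h2 := congrFun h (⟨t, by omega⟩ : Fin n)
      calc v ⟨t, ht⟩ = v ⟨min t (n - 1 - t), by omega⟩ := aux_fcg v _ _ (by omega)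
        _ = v' ⟨min t (n - 1 - t), by omega⟩ := h2
        _ = v' ⟨t, ht⟩ := aux_fcg v' _ _ (by omega)
  -- window shifting
  have succ_eq : ∀ (v : Fin (n / 2) → ZMod q) (x : ZMod q) (i : ℤ),
      window s n i = OSL q n v x → window s n (i + 1) = OSR q n v (s (i + n)) := by
    intro v x i h
    funext k
    obtain ⟨j, hj⟩ := k
    rw [aux_OSR_mk]
    by_cases hc : j = n - 1
    · rw [if_pos hc]
      show s (i + 1 + ((j : ℕ) : ℤ)) = s (i + (n : ℤ))
      subst hc
      have e : i + 1 + (((n - 1 : ℕ)) : ℤ) = i + (n : ℤ) := by omega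
      rw [e]
    · rw [if_neg hc]
      have hj1 : j + 1 < n := by omega
      have h2 := congrFun h (⟨j + 1, hj1⟩ : Fin n)
      rw [aux_OSL_mk, if_neg (by omega)] at h2
      have e2 : j + 1 - 1 = j := by omega
      rw [e2] at h2
      show s (i + 1 + ((j : ℕ) : ℤ)) = OSpv q n v j
      have e : i + 1 + ((j : ℕ) : ℤ) = i + (((j + 1 : ℕ)) : ℤ) := by omega
      rw [e]
      exact h2
  have pred_eq : ∀ (v : Fin (n / 2) → ZMod q) (y : ZMod q) (i : ℤ),
      window s n i = OSR q n v y → window s n (i - 1) = OSL q n v (s (i - 1)) := by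
    intro v y i h
    funext k
    obtain ⟨j, hj⟩ := k
    rw [aux_OSL_mk]
    by_cases hc : j = 0
    · rw [if_pos hc]
      show s (i - 1 + ((j : ℕ) : ℤ)) = s (i - 1)
      subst hc
      norm_num
    · rw [if_neg hc]
      have hj1 : j - 1 < n := by omega
      have h2 := congrFun h (⟨j - 1, hj1⟩ : Fin n)
      rw [aux_OSR_mk, if_neg (by omega)] at h2
      show s (i - 1 + ((j : ℕ) : ℤ)) = OSpv q n v (j - 1)
      have e : i - 1 + ((j : ℕ) : ℤ) = i + (((j - 1 : ℕ)) : ℤ) := by omega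
      rw [e]
      exact h2
  -- key existence: for every v there is x with (x,p_v) not a window in either direction
  have key_exists : ∀ v : Fin (n / 2) → ZMod q,
      ∃ x : ZMod q, OSL q n v x ∉ W ∧ OSL q n v x ∉ WR := by
    intro v
    set A : Finset (ZMod q) := Finset.univ.filter (fun x => OSL q n v x ∈ W) with hAdef
    set B : Finset (ZMod q) := Finset.univ.filter (fun y => OSR q n v y ∈ W) with hBdef
    have hAmem : ∀ x, x ∈ A ↔ ∃ i : ℤ, window s n i = OSL q n v x := by
      intro x; rw [hAdef]
      simp only [Finset.mem_filter, Finset.mem_univ, true_and]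
      exact hWmem _
    have hBmem : ∀ y, y ∈ B ↔ ∃ i : ℤ, window s n i = OSR q n v y := by
      intro y; rw [hBdef]
      simp only [Finset.mem_filter, Finset.mem_univ, true_and]
      exact hWmem _
    have hABdisj : ∀ x, x ∈ A → x ∈ B → False := by
      intro x hxA hxB
      obtain ⟨i, hi⟩ := (hBmem x).mp hxB
      obtain ⟨j', hj'⟩ := (hAmem x).mp hxA
      refine horient i j' ?_
      rw [hi, hj', aux_rev_L (by omega) v x]
    have hcardAB : A.card = B.card := by
      refine Finset.card_bij' (fun x hx => s (Classical.choose ((hAmem x).mp hx) + n))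
        (fun y hy => s (Classical.choose ((hBmem y).mp hy) - 1)) ?_ ?_ ?_ ?_
      · intro x hx
        have hspec := Classical.choose_spec ((hAmem x).mp hx)
        exact (hBmem _).mpr ⟨_, succ_eq v x _ hspec⟩
      · intro y hy
        have hspec := Classical.choose_spec ((hBmem y).mp hy)
        exact (hAmem _).mpr ⟨_, pred_eq v y _ hspec⟩
      · intro x hx
        have hspec := Classical.choose_spec ((hAmem x).mp hx)
        set i1 := Classical.choose ((hAmem x).mp hx) with hi1
        have gen : ∀ h2 : ∃ i : ℤ, window s n i = OSR q n v (s (i1 + n)),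
            s (Classical.choose h2 - 1) = x := by
          intro h2
          have hs2 := Classical.choose_spec h2
          set i2 := Classical.choose h2 with hi2
          have hw2 : window s n i2 = window s n (i1 + 1) := by
            rw [hs2, succ_eq v x i1 hspec]
          have hcong := hwin _ _ hw2
          have hcong2 : (i2 - 1) ≡ i1 [ZMOD (m : ℤ)] := by
            have := Int.ModEq.sub_right 1 hcong
            simpa using this
          have hs3 : s (i2 - 1) = s i1 := scong _ _ hcong2
          have h0 := congrFun hspec (⟨0, by omega⟩ : Fin n)
          rw [aux_OSL_mk, if_pos rfl] at h0
          have e0 : i1 + ((0 : ℕ) : ℤ) = i1 := by simp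
          rw [hs3]
          rw [← h0]
          show s i1 = s (i1 + ((0 : ℕ) : ℤ))
          rw [e0]
        exact gen _
      · intro y hy
        have hspec := Classical.choose_spec ((hBmem y).mp hy)
        set i2 := Classical.choose ((hBmem y).mp hy) with hi2
        have gen : ∀ h2 : ∃ i : ℤ, window s n i = OSL q n v (s (i2 - 1)),
            s (Classical.choose h2 + n) = y := by
          intro h2
          have hs3 := Classical.choose_spec h2
          set i3 := Classical.choose h2 with hi3
          have hw2 : window s n i3 = window s n (i2 - 1) := by
            rw [hs3, pred_eq v y i2 hspec]
          have hcong := hwin _ _ hw2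
          have hcong2 : (i3 + n) ≡ (i2 - 1 + n) [ZMOD (m : ℤ)] :=
            Int.ModEq.add_right _ hcong
          have hs4 : s (i3 + n) = s (i2 - 1 + n) := scong _ _ hcong2
          have h4 := congrFun hspec (⟨n - 1, by omega⟩ : Fin n)
          rw [aux_OSR_mk, if_pos rfl] at h4
          have e4 : i2 - 1 + (n : ℤ) = i2 + (((n - 1 : ℕ)) : ℤ) := by omega
          rw [hs4, e4]
          exact h4
        exact gen _
    by_contra hcon
    push_neg at hcon
    have hall : ∀ x : ZMod q, x ∈ A ∪ B := by
      intro x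
      rcases em (OSL q n v x ∈ W) with h | h
      · refine Finset.mem_union_left _ ?_
        rw [hAdef]
        exact Finset.mem_filter.mpr ⟨Finset.mem_univ _, h⟩
      · have h2 := hcon x h
        refine Finset.mem_union_right _ ?_
        rw [hBdef]
        refine Finset.mem_filter.mpr ⟨Finset.mem_univ _, ?_⟩
        rw [← aux_rev_L (by omega) v x]
        exact (hWRmem _).mp h2
    have huniv2 : A ∪ B = Finset.univ := Finset.eq_univ_iff_forall.mpr hall
    have hdisjAB : Disjoint A B := Finset.disjoint_left.mpr fun {x} h1 h2 =>
      (hABdisj x h1 h2).elim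
    have hqAB : q = A.card + B.card := by
      rw [← Finset.card_union_of_disjoint hdisjAB, huniv2, Finset.card_univ, ZMod.card]
    obtain ⟨t, ht⟩ := hqodd
    omega
  -- the set E1
  set E1 : Finset (Fin n → ZMod q) := Finset.univ.filter
    (fun u => OSSuffPal q n u ∧ u ∉ W ∧ u ∉ WR ∧ ¬ ∃ c : ZMod q, ∀ k : Fin n, u k = c)
    with hE1def
  have hE1mem : ∀ u, u ∈ E1 ↔
      (OSSuffPal q n u ∧ u ∉ W ∧ u ∉ WR ∧ ¬ ∃ c : ZMod q, ∀ k : Fin n, u k = c) := by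
    intro u; rw [hE1def]; simp only [Finset.mem_filter, Finset.mem_univ, true_and]
  have hrecov : ∀ (v : Fin (n / 2) → ZMod q) (x : ZMod q) (t : ℕ) (ht : t < n / 2)
      (ht2 : t + 1 < n), OSL q n v x ⟨t + 1, ht2⟩ = v ⟨t, ht⟩ := by
    intro v x t ht ht2
    rw [aux_OSL_mk, if_neg (by omega)]
    have e : t + 1 - 1 = t := by omega
    rw [e]
    exact OSpv_lt hnmod (by omega) v ht
  have hE1card : q ^ (n / 2) ≤ E1.card + q := by
    set CC : Finset (Fin (n / 2) → ZMod q) := Finset.univ.filter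
      (fun v => ∃ c : ZMod q, ∀ j, v j = c) with hCCdef
    set NC : Finset (Fin (n / 2) → ZMod q) := Finset.univ.filter
      (fun v => ¬ ∃ c : ZMod q, ∀ j, v j = c) with hNCdef
    have hCcard : CC.card ≤ q := by
      have h := Finset.card_le_card_of_injOn (fun v : Fin (n / 2) → ZMod q => v ⟨0, by omega⟩)
        (s := CC) (t := (Finset.univ : Finset (ZMod q))) (fun v _ => Finset.mem_univ _) ?_
      · calc CC.card ≤ (Finset.univ : Finset (ZMod q)).card := h
          _ = q := by rw [Finset.card_univ, ZMod.card]
      · intro v hv v' hv' h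
        have hv2 := Finset.mem_coe.mp hv
        have hv'2 := Finset.mem_coe.mp hv'
        rw [hCCdef] at hv2 hv'2
        obtain ⟨c, hc⟩ := (Finset.mem_filter.mp hv2).2
        obtain ⟨c', hc'⟩ := (Finset.mem_filter.mp hv'2).2
        funext j
        calc v j = c := hc j
          _ = v ⟨0, by omega⟩ := (hc _).symm
          _ = v' ⟨0, by omega⟩ := h
          _ = c' := hc' _
          _ = v' j := (hc' j).symm
    have hNCcard : q ^ (n / 2) ≤ NC.card + q := by
      have hun : CC ∪ NC = Finset.univ := by
        rw [hCCdef, hNCdef]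
        exact Finset.filter_union_filter_not_eq _ _
      have hle := Finset.card_union_le CC NC
      rw [hun, Finset.card_univ] at hle
      have huc : Fintype.card (Fin (n / 2) → ZMod q) = q ^ (n / 2) := by
        simp [Fintype.card_fun, ZMod.card]
      omega
    have hinj : NC.card ≤ E1.card := by
      apply Finset.card_le_card_of_injOn
        (fun v => OSL q n v (Classical.choose (key_exists v)))
      · intro v hv
        have hv2 := hv
        rw [hNCdef] at hv2
        have hnc := (Finset.mem_filter.mp hv2).2
        obtain ⟨hx1, hx2⟩ := Classical.choose_spec (key_exists v)
        refine (hE1mem _).mpr ⟨suffpal_OSL (by omega) v _, hx1, hx2, ?_⟩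
        rintro ⟨c, hc⟩
        refine hnc ⟨c, ?_⟩
        intro j
        obtain ⟨t, ht⟩ := j
        rw [← hrecov v _ t ht (by omega)]
        exact hc _
      · intro v hv v' hv' h
        have h2 : OSL q n v (Classical.choose (key_exists v))
            = OSL q n v' (Classical.choose (key_exists v')) := h
        funext j
        obtain ⟨t, ht⟩ := j
        rw [← hrecov v _ t ht (by omega), ← hrecov v' _ t ht (by omega), h2]
    omega
  -- E1 and its reverse sit inside X
  set E1R : Finset (Fin n → ZMod q) := E1.image tupRev with hE1Rdef
  have hE1sub : E1 ⊆ X := by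
    intro u hu
    obtain ⟨hp, h1, h2, h3⟩ := (hE1mem u).mp hu
    refine (hXmem u).mpr ⟨h1, h2, fun hsym => h3 ?_⟩
    exact const_of_suffpal_symm (by omega) u hp hsym
  have hE1Rsub : E1R ⊆ X := by
    intro u hu
    rw [hE1Rdef] at hu
    obtain ⟨w, hw, hwu⟩ := Finset.mem_image.mp hu
    obtain ⟨hp, h1, h2, h3⟩ := (hE1mem w).mp hw
    subst hwu
    refine (hXmem _).mpr ⟨?_, ?_, ?_⟩
    · intro hc
      exact h2 ((hWRmem w).mpr hc)
    · intro hc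
      have := (hWRmem _).mp hc
      rw [aux_rev_invol] at this
      exact h1 this
    · intro hc
      rw [aux_rev_invol] at hc
      exact h3 (const_of_suffpal_symm (by omega) w hp hc.symm)
  have hE1inter : (E1 ∩ E1R).card ≤ q ^ 2 := by
    have hsub : E1 ∩ E1R ⊆ Finset.univ.filter (fun u => OSAlt q n u) := by
      intro u hu
      rw [Finset.mem_inter] at hu
      obtain ⟨hu1, hu2⟩ := hu
      obtain ⟨hp, -, -, -⟩ := (hE1mem u).mp hu1
      rw [hE1Rdef] at hu2
      obtain ⟨w, hw, hwu⟩ := Finset.mem_image.mp hu2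
      obtain ⟨hpw, -, -, -⟩ := (hE1mem w).mp hw
      have hrev : OSSuffPal q n (tupRev u) := by
        rw [← hwu, aux_rev_invol]; exact hpw
      exact Finset.mem_filter.mpr ⟨Finset.mem_univ _, alt_of_two_pal hn u hp hrev⟩
    have h2 : (Finset.univ.filter (fun u : Fin n → ZMod q => OSAlt q n u)).card ≤ q ^ 2 := by
      have h := Finset.card_le_card_of_injOn
        (fun u : Fin n → ZMod q => (u ⟨0, by omega⟩, u ⟨1, by omega⟩))
        (s := Finset.univ.filter (fun u : Fin n → ZMod q => OSAlt q n u))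
        (t := (Finset.univ : Finset (ZMod q × ZMod q))) (fun u _ => Finset.mem_univ _) ?_
      · calc _ ≤ (Finset.univ : Finset (ZMod q × ZMod q)).card := h
          _ = q ^ 2 := by
            rw [Finset.card_univ, Fintype.card_prod, ZMod.card]
            ring
      · intro u hu u' hu' h
        have ha := (Finset.mem_filter.mp (Finset.mem_coe.mp hu)).2
        have hb := (Finset.mem_filter.mp (Finset.mem_coe.mp hu')).2
        have h0 := congrArg Prod.fst h
        have h1 := congrArg Prod.snd h
        simp only at h0 h1
        exact alt_eq_of_two (by omega) u u' ha hb h0 h1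
    exact le_trans (Finset.card_le_card hsub) h2
  have hXbound : 2 * E1.card ≤ X.card + q ^ 2 := by
    have h1 : (E1 ∪ E1R).card ≤ X.card :=
      Finset.card_le_card (Finset.union_subset hE1sub hE1Rsub)
    have h2 := Finset.card_union_add_card_inter E1 E1R
    have h3 : E1R.card = E1.card := by
      rw [hE1Rdef]; exact Finset.card_image_of_injective _ hrevinj
    omega
  -- arithmetic wrap-up
  have hq2 : q ^ ((n - 2) / 2) + q ^ 2 ≤ q ^ (n / 2) := by
    have e : n / 2 = (n - 2) / 2 + 1 := by omega
    have h1 : q ^ 2 ≤ q ^ ((n - 2) / 2) := Nat.pow_le_pow_right (by omega) (by omega)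
    calc q ^ ((n - 2) / 2) + q ^ 2 ≤ 2 * q ^ ((n - 2) / 2) := by omega
      _ ≤ q * q ^ ((n - 2) / 2) := Nat.mul_le_mul_right _ (by omega)
      _ = q ^ (n / 2) := by rw [e, pow_succ]; ring
  have hmain : 2 * m + 2 * q ^ (n / 2) + q ^ ((n - 2) / 2) ≤ q ^ n + 2 * q := by omega
  have hcast : ((2 * m + 2 * q ^ (n / 2) + q ^ ((n - 2) / 2) : ℕ) : ℤ)
      ≤ ((q ^ n + 2 * q : ℕ) : ℤ) := by exact_mod_cast hmain
  push_cast at hcast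
  linarith
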